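/- Let F ⊆ ℝ be a subfield and E_F the relation on ℝ^n \ F^n connecting x_0, x_1 if x_0 = x_1 or there exist algebraic sets A_0, A_1 ⊊ ℝ^n defined by polynomials with coefficients in F with x_0 ∈ A_0, x_1 ∈ A_1, and polynomial maps f_0, f_1 : ℝ^n → ℝ^n with coefficients in F such that f_0(x_0) = x_1 and f_1(x_1) = x_0. If {x_0, x_1, x_2, x_3} is a non-degenerate rectangle with x_0, x_1 ∈ F^n and x_2, x_3 ∉ F^n, then x_2 E_F x_3. -/

import Mathlib

open RealInnerProductSpace

/-- An algebraic set visible from `F`: the zero set of a polynomial all of whose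
coefficients lie in the subfield `F`. -/
def VisibleAlgSet {n : ℕ} (F : Subfield ℝ) (A : Set (EuclideanSpace ℝ (Fin n))) : Prop :=
  ∃ p : MvPolynomial (Fin n) ℝ, (∀ m, MvPolynomial.coeff m p ∈ F) ∧
    A = {x | MvPolynomial.eval (fun i => x i) p = 0}

/-- A polynomial map `ℝ^n → ℝ^n` visible from `F`: each coordinate function is a
polynomial with coefficients in `F`. -/
def VisiblePolyMap {n : ℕ} (F : Subfield ℝ)
    (f : EuclideanSpace ℝ (Fin n) → EuclideanSpace ℝ (Fin n)) : Prop :=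
  ∃ p : Fin n → MvPolynomial (Fin n) ℝ, (∀ j m, MvPolynomial.coeff m (p j) ∈ F) ∧
    ∀ x j, f x j = MvPolynomial.eval (fun i => x i) (p j)

/-- The relation `E_F`. -/
def EF {n : ℕ} (F : Subfield ℝ) (x y : EuclideanSpace ℝ (Fin n)) : Prop :=
  x = y ∨
    ∃ A B : Set (EuclideanSpace ℝ (Fin n)), VisibleAlgSet F A ∧ VisibleAlgSet F B ∧
      A ≠ Set.univ ∧ B ≠ Set.univ ∧ x ∈ A ∧ y ∈ B ∧
      ∃ f g : EuclideanSpace ℝ (Fin n) → EuclideanSpace ℝ (Fin n),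
        VisiblePolyMap F f ∧ VisiblePolyMap F g ∧ f x = y ∧ g y = x

/-- `IsRectangle x₀ x₁ x₂ x₃` : the four points form a Euclidean rectangle where `x₀`
and `x₁` are opposite vertices and `x₂`, `x₃` are opposite vertices. -/
def IsRectangle {n : ℕ} (x₀ x₁ x₂ x₃ : EuclideanSpace ℝ (Fin n)) : Prop :=
  x₀ + x₁ = x₂ + x₃ ∧ ⟪x₂ - x₀, x₃ - x₀⟫ = 0

set_option maxHeartbeats 2000000
set_option synthInstance.maxHeartbeats 400000

open MvPolynomial in
/-- A hyperplane-type set given by data in `F` is a visible algebraic set. -/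
lemma vis_hyperplane {n : ℕ} (F : Subfield ℝ) (u : Fin n → ℝ) (hu : ∀ i, u i ∈ F)
    (a : ℝ) (ha : a ∈ F) :
    VisibleAlgSet F {x : EuclideanSpace ℝ (Fin n) | (∑ i, u i * x i) - a = 0} := by
  refine ⟨MvPolynomial.map F.subtype
      ((∑ i, C (⟨u i, hu i⟩ : F) * X i) - C (⟨a, ha⟩ : F)), ?_, ?_⟩
  · intro m; rw [MvPolynomial.coeff_map]; exact SetLike.coe_mem _
  · ext x
    simp [MvPolynomial.eval_map, eval₂_sub, eval₂_mul]

open MvPolynomial in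
/-- A sphere-type set given by data in `F` is a visible algebraic set. -/
lemma vis_sphere {n : ℕ} (F : Subfield ℝ) (m : Fin n → ℝ) (hm : ∀ i, m i ∈ F)
    (r : ℝ) (hr : r ∈ F) :
    VisibleAlgSet F {x : EuclideanSpace ℝ (Fin n) | (∑ i, (x i - m i) ^ 2) - r = 0} := by
  refine ⟨MvPolynomial.map F.subtype
      ((∑ i, (X i - C (⟨m i, hm i⟩ : F)) ^ 2) - C (⟨r, hr⟩ : F)), ?_, ?_⟩
  · intro mm; rw [MvPolynomial.coeff_map]; exact SetLike.coe_mem _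
  · ext x
    simp [MvPolynomial.eval_map, eval₂_sub, eval₂_pow]

open MvPolynomial in
/-- Translation by a vector with coordinates in `F` is a visible polynomial map. -/
lemma vis_translate {n : ℕ} (F : Subfield ℝ) (u : Fin n → ℝ) (hu : ∀ i, u i ∈ F) :
    VisiblePolyMap F (fun x : EuclideanSpace ℝ (Fin n) => WithLp.toLp 2 (fun j => x j - u j)) := by
  refine ⟨fun j => MvPolynomial.map F.subtype (X j - C (⟨u j, hu j⟩ : F)), ?_, ?_⟩
  · intro j m; rw [MvPolynomial.coeff_map]; exact SetLike.coe_mem _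
  · intro x j; simp [MvPolynomial.eval_map, eval₂_sub]

open MvPolynomial in
/-- Point reflection through a point with coordinates in `F` is a visible polynomial map. -/
lemma vis_reflect {n : ℕ} (F : Subfield ℝ) (s : Fin n → ℝ) (hs : ∀ i, s i ∈ F) :
    VisiblePolyMap F (fun x : EuclideanSpace ℝ (Fin n) => WithLp.toLp 2 (fun j => s j - x j)) := by
  refine ⟨fun j => MvPolynomial.map F.subtype (C (⟨s j, hs j⟩ : F) - X j), ?_, ?_⟩
  · intro j m; rw [MvPolynomial.coeff_map]; exact SetLike.coe_mem _
  · intro x j; simp [MvPolynomial.eval_map, eval₂_sub]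

/-- If `x₃` is obtained from `x₂` by translating by a nonzero vector `u` with
coordinates in `F`, and `⟪u, x₂⟫` lies in `F`, then `x₂ E_F x₃`. -/
lemma ef_translate {n : ℕ} (F : Subfield ℝ) (x₂ x₃ : EuclideanSpace ℝ (Fin n))
    (u : Fin n → ℝ) (hu : ∀ i, u i ∈ F) (hune : ∃ i, u i ≠ 0)
    (a : ℝ) (ha : a ∈ F) (h2 : ∑ i, u i * x₂ i = a) (h3 : ∀ i, x₃ i = x₂ i - u i) :
    EF F x₂ x₃ := by
  right
  have hs : (0:ℝ) < ∑ i, u i ^ 2 := by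
    obtain ⟨i, hi⟩ := hune
    exact Finset.sum_pos' (fun j _ => sq_nonneg _)
      ⟨i, Finset.mem_univ _, by positivity⟩
  have hsF : (∑ i, u i ^ 2) ∈ F := Subfield.sum_mem F (fun i _ => by
    simpa [sq] using F.mul_mem (hu i) (hu i))
  refine ⟨{x | (∑ i, u i * x i) - a = 0},
    {x | (∑ i, u i * x i) - (a - ∑ i, u i ^ 2) = 0},
    vis_hyperplane F u hu a ha,
    vis_hyperplane F u hu _ (F.sub_mem ha hsF), ?_, ?_, ?_, ?_, ?_⟩
  · -- A ≠ univ : the point x₂ + u is not in A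
    intro hA
    have hmem : (WithLp.toLp 2 (fun i => x₂ i + u i) : EuclideanSpace ℝ (Fin n)) ∈
        {x : EuclideanSpace ℝ (Fin n) | (∑ i, u i * x i) - a = 0} := hA ▸ Set.mem_univ _
    have : (∑ i, u i * (x₂ i + u i)) - a = 0 := hmem
    have hexp : ∑ i, u i * (x₂ i + u i) = (∑ i, u i * x₂ i) + ∑ i, u i ^ 2 := by
      rw [← Finset.sum_add_distrib]
      exact Finset.sum_congr rfl (fun i _ => by ring)
    rw [hexp, h2] at this
    linarith
  · -- B ≠ univ : x₂ is not in B
    intro hB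
    have hmem : x₂ ∈ {x : EuclideanSpace ℝ (Fin n) |
        (∑ i, u i * x i) - (a - ∑ i, u i ^ 2) = 0} := hB ▸ Set.mem_univ _
    have : (∑ i, u i * x₂ i) - (a - ∑ i, u i ^ 2) = 0 := hmem
    rw [h2] at this
    linarith
  · show (∑ i, u i * x₂ i) - a = 0
    rw [h2]; ring
  · show (∑ i, u i * x₃ i) - (a - ∑ i, u i ^ 2) = 0
    have hexp : ∑ i, u i * x₃ i = (∑ i, u i * x₂ i) - ∑ i, u i ^ 2 := by
      rw [← Finset.sum_sub_distrib]
      exact Finset.sum_congr rfl (fun i _ => by rw [h3 i]; ring)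
    rw [hexp, h2]; ring
  · refine ⟨fun x => WithLp.toLp 2 (fun j => x j - u j), fun x => WithLp.toLp 2 (fun j => x j - (-u j)),
      vis_translate F u hu, vis_translate F (fun j => -u j) (fun j => F.neg_mem (hu j)),
      ?_, ?_⟩
    · ext j; exact (h3 j).symm
    · ext j; show x₃ j - -u j = x₂ j; rw [h3 j]; ring

/-- If `{x₀, x₁, x₂, x₃}` is a non-degenerate rectangle (in any pairing) with
`x₀, x₁ ∈ F^n` and `x₂, x₃ ∉ F^n`, then `x₂ E_F x₃`. -/
theorem stmt_14 {n : ℕ} (F : Subfield ℝ) (x₀ x₁ x₂ x₃ : EuclideanSpace ℝ (Fin n))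
    (hrect : IsRectangle x₀ x₁ x₂ x₃ ∨ IsRectangle x₀ x₂ x₁ x₃ ∨
      IsRectangle x₀ x₃ x₁ x₂)
    (hnd : List.Pairwise (· ≠ ·) [x₀, x₁, x₂, x₃])
    (h₀ : ∀ i, x₀ i ∈ F) (h₁ : ∀ i, x₁ i ∈ F)
    (h₂ : ¬ ∀ i, x₂ i ∈ F) (h₃ : ¬ ∀ i, x₃ i ∈ F) :
    EF F x₂ x₃ := by
  simp only [List.pairwise_cons, List.mem_cons, List.mem_singleton, List.not_mem_nil] at hnd
  have h01 : x₀ ≠ x₁ := by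
    intro h; exact (hnd.1 x₁ (by simp)) h
  have hex01 : ∃ i, x₀ i ≠ x₁ i := by
    by_contra hc
    push_neg at hc
    exact h01 (PiLp.ext hc)
  rcases hrect with ⟨heq, hinn⟩ | ⟨heq, hinn⟩ | ⟨heq, hinn⟩
  · -- x₀, x₁ opposite; x₂, x₃ opposite: use the sphere about the center.
    have hpt : ∀ i, x₀ i + x₁ i = x₂ i + x₃ i := fun i => by
      have := congrArg (fun v => v i) heq; simpa using this
    have hinns : ∑ i, (x₂ i - x₀ i) * (x₃ i - x₀ i) = 0 := by
      simpa [PiLp.inner_apply, RCLike.inner_apply, mul_comm] using hinn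
    set m : Fin n → ℝ := fun i => (x₀ i + x₁ i) / 2 with hm
    have h2F : (2:ℝ) ∈ F := by
      have := F.one_mem
      have h2 : (2:ℝ) = 1 + 1 := by norm_num
      rw [h2]; exact F.add_mem this this
    have hmF : ∀ i, m i ∈ F := fun i => F.div_mem (F.add_mem (h₀ i) (h₁ i)) h2F
    set r : ℝ := ∑ i, (x₀ i - m i) ^ 2 with hr
    have hrF : r ∈ F := Subfield.sum_mem F (fun i _ => by
      have hx : x₀ i - m i ∈ F := F.sub_mem (h₀ i) (hmF i)
      simpa [sq] using F.mul_mem hx hx)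
    have hrpos : 0 < r := by
      obtain ⟨i, hi⟩ := hex01
      have : x₀ i - m i ≠ 0 := by
        simp only [hm]
        intro h; apply hi; linarith [h]
      exact Finset.sum_pos' (fun j _ => sq_nonneg _)
        ⟨i, Finset.mem_univ _, by positivity⟩
    have hx2mem : (∑ i, (x₂ i - m i) ^ 2) - r = 0 := by
      have key : ∀ i, (x₂ i - m i) ^ 2 - (x₀ i - m i) ^ 2
          = -((x₂ i - x₀ i) * (x₃ i - x₀ i)) := by
        intro i
        have h := hpt i
        simp only [hm]
        linear_combination (-(x₂ i - x₀ i)) * h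
      calc (∑ i, (x₂ i - m i) ^ 2) - r
          = ∑ i, ((x₂ i - m i) ^ 2 - (x₀ i - m i) ^ 2) := by
            rw [hr, Finset.sum_sub_distrib]
        _ = ∑ i, -((x₂ i - x₀ i) * (x₃ i - x₀ i)) :=
            Finset.sum_congr rfl (fun i _ => key i)
        _ = 0 := by rw [Finset.sum_neg_distrib, hinns, neg_zero]
    have hx3mem : (∑ i, (x₃ i - m i) ^ 2) - r = 0 := by
      have key : ∀ i, (x₃ i - m i) ^ 2 = (x₂ i - m i) ^ 2 := by
        intro i
        have h := hpt i
        simp only [hm]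
        linear_combination (x₂ i - x₃ i) * h
      calc (∑ i, (x₃ i - m i) ^ 2) - r = (∑ i, (x₂ i - m i) ^ 2) - r := by
            rw [Finset.sum_congr rfl (fun i _ => key i)]
        _ = 0 := hx2mem
    right
    refine ⟨{x | (∑ i, (x i - m i) ^ 2) - r = 0}, {x | (∑ i, (x i - m i) ^ 2) - r = 0},
      vis_sphere F m hmF r hrF, vis_sphere F m hmF r hrF, ?_, ?_, hx2mem, hx3mem, ?_⟩
    · intro hA
      have hmem : (WithLp.toLp 2 (fun i => m i) : EuclideanSpace ℝ (Fin n)) ∈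
          {x : EuclideanSpace ℝ (Fin n) | (∑ i, (x i - m i) ^ 2) - r = 0} :=
        hA ▸ Set.mem_univ _
      have : (∑ i, ((WithLp.toLp 2 (fun i => m i) : EuclideanSpace ℝ (Fin n)) i - m i) ^ 2) - r = 0 := hmem
      simp at this
      linarith
    · intro hA
      have hmem : (WithLp.toLp 2 (fun i => m i) : EuclideanSpace ℝ (Fin n)) ∈
          {x : EuclideanSpace ℝ (Fin n) | (∑ i, (x i - m i) ^ 2) - r = 0} :=
        hA ▸ Set.mem_univ _
      have : (∑ i, ((WithLp.toLp 2 (fun i => m i) : EuclideanSpace ℝ (Fin n)) i - m i) ^ 2) - r = 0 := hmem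
      simp at this
      linarith
    · refine ⟨fun x => WithLp.toLp 2 (fun j => (x₀ j + x₁ j) - x j), fun x => WithLp.toLp 2 (fun j => (x₀ j + x₁ j) - x j),
        vis_reflect F (fun j => x₀ j + x₁ j) (fun j => F.add_mem (h₀ j) (h₁ j)),
        vis_reflect F (fun j => x₀ j + x₁ j) (fun j => F.add_mem (h₀ j) (h₁ j)), ?_, ?_⟩
      · ext j; have := hpt j; show x₀ j + x₁ j - x₂ j = x₃ j; linarith
      · ext j; have := hpt j; show x₀ j + x₁ j - x₃ j = x₂ j; linarith
  · -- x₀, x₂ opposite; x₂, x₃ adjacent: translate by u = x₁ - x₀.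
    have hpt : ∀ i, x₀ i + x₂ i = x₁ i + x₃ i := fun i => by
      have := congrArg (fun v => v i) heq; simpa using this
    have hinns : ∑ i, (x₁ i - x₀ i) * (x₃ i - x₀ i) = 0 := by
      simpa [PiLp.inner_apply, RCLike.inner_apply, mul_comm] using hinn
    refine ef_translate F x₂ x₃ (fun i => x₁ i - x₀ i)
      (fun i => F.sub_mem (h₁ i) (h₀ i))
      (by obtain ⟨i, hi⟩ := hex01; exact ⟨i, sub_ne_zero.mpr (Ne.symm hi)⟩)
      (∑ i, (x₁ i - x₀ i) * x₁ i)
      (Subfield.sum_mem F (fun i _ => F.mul_mem (F.sub_mem (h₁ i) (h₀ i)) (h₁ i)))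
      ?_ (fun i => by show x₃ i = x₂ i - (x₁ i - x₀ i); have := hpt i; linarith)
    have hexp : (∑ i, (x₁ i - x₀ i) * x₂ i) - ∑ i, (x₁ i - x₀ i) * x₁ i
        = ∑ i, (x₁ i - x₀ i) * (x₃ i - x₀ i) := by
      rw [← Finset.sum_sub_distrib]
      refine Finset.sum_congr rfl (fun i _ => ?_)
      have h := hpt i
      linear_combination (x₁ i - x₀ i) * h
    have := hexp.trans hinns
    linarith
  · -- x₀, x₃ opposite; x₂, x₃ adjacent: translate by u = x₀ - x₁.
    have hpt : ∀ i, x₀ i + x₃ i = x₁ i + x₂ i := fun i => by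
      have := congrArg (fun v => v i) heq; simpa using this
    have hinns : ∑ i, (x₁ i - x₀ i) * (x₂ i - x₀ i) = 0 := by
      simpa [PiLp.inner_apply, RCLike.inner_apply, mul_comm] using hinn
    refine ef_translate F x₂ x₃ (fun i => x₀ i - x₁ i)
      (fun i => F.sub_mem (h₀ i) (h₁ i))
      (by obtain ⟨i, hi⟩ := hex01; exact ⟨i, sub_ne_zero.mpr hi⟩)
      (∑ i, (x₀ i - x₁ i) * x₀ i)
      (Subfield.sum_mem F (fun i _ => F.mul_mem (F.sub_mem (h₀ i) (h₁ i)) (h₀ i)))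
      ?_ (fun i => by show x₃ i = x₂ i - (x₀ i - x₁ i); have := hpt i; linarith)
    have hexp : (∑ i, (x₀ i - x₁ i) * x₂ i) - ∑ i, (x₀ i - x₁ i) * x₀ i
        = ∑ i, -((x₁ i - x₀ i) * (x₂ i - x₀ i)) := by
      rw [← Finset.sum_sub_distrib]
      refine Finset.sum_congr rfl (fun i _ => by ring)
    rw [Finset.sum_neg_distrib, hinns, neg_zero] at hexp
    linarith
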